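/- Let G be a linearly ordered abelian group with finite spines, p a prime, H_0 ⊊ H_1 ⊊ … ⊊ H_{n-1} convex subgroups of G with H_n := G, and e_0 < e_1 < … < e_{n-1} positive integers. Then for every r < n, the index [⋂_{i<n, i≠r}(H_i + p^{e_i}G) : ⋂_{i<n}(H_i + p^{e_i}G)] is infinite if and only if the index [H_{r+1} : H_r + pH_{r+1}] is infinite (the latter equals the index of p(H_{r+1}/H_r) in H_{r+1}/H_r). -/

import Mathlib

/-- `nH = {n • h : h ∈ H}` as a subgroup. -/
def smulSub {G : Type*} [AddCommGroup G] (n : ℕ) (H : AddSubgroup G) : AddSubgroup G :=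
  AddSubgroup.map (n • AddMonoidHom.id G) H

/-- A subgroup `H` of a linearly ordered abelian group is convex if
`0 ≤ g ≤ h` and `h ∈ H` imply `g ∈ H`. -/
def IsConvexSubgroup {G : Type*} [AddCommGroup G] [LinearOrder G] [IsOrderedAddMonoid G] (H : AddSubgroup G) : Prop :=
  ∀ g h : G, 0 ≤ g → g ≤ h → h ∈ H → g ∈ H

/-- `H_n(a)`: the largest convex subgroup `H` of `G` with `a ∉ H + nG` (equivalently the
union, i.e. supremum, of all such subgroups); it is the trivial subgroup when `a ∈ nG`. -/
def Hsub {G : Type*} [AddCommGroup G] [LinearOrder G] [IsOrderedAddMonoid G] (n : ℕ) (a : G) : AddSubgroup G :=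
  sSup {H : AddSubgroup G | IsConvexSubgroup H ∧ a ∉ H ⊔ smulSub n ⊤}

section Aux

variable {G : Type*} [AddCommGroup G]

lemma mem_smulSub {n : ℕ} {H : AddSubgroup G} {x : G} :
    x ∈ smulSub n H ↔ ∃ h ∈ H, n • h = x := by
  simp [smulSub, AddSubgroup.mem_map]

lemma smul_mem_smulSub {n : ℕ} {H : AddSubgroup G} {h : G} (hh : h ∈ H) :
    n • h ∈ smulSub n H :=
  mem_smulSub.mpr ⟨h, hh, rfl⟩

lemma smulSub_le_self (n : ℕ) (H : AddSubgroup G) : smulSub n H ≤ H := by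
  intro x hx
  obtain ⟨y, hy, rfl⟩ := mem_smulSub.mp hx
  exact AddSubgroup.nsmul_mem H hy n

lemma smulSub_mono (n : ℕ) {H K : AddSubgroup G} (h : H ≤ K) : smulSub n H ≤ smulSub n K := by
  intro x hx
  obtain ⟨y, hy, rfl⟩ := mem_smulSub.mp hx
  exact smul_mem_smulSub (h hy)

lemma smulSub_one (H : AddSubgroup G) : smulSub 1 H = H := by
  ext x
  simp only [mem_smulSub, one_nsmul]
  exact ⟨fun ⟨h, hh, e⟩ => e ▸ hh, fun hx => ⟨x, hx, rfl⟩⟩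

lemma smulSub_pow_le (p : ℕ) {a b : ℕ} (hab : a ≤ b) (S : AddSubgroup G) :
    smulSub (p ^ b) S ≤ smulSub (p ^ a) S := by
  intro x hx
  obtain ⟨y, hy, rfl⟩ := mem_smulSub.mp hx
  have : p ^ b = p ^ a * p ^ (b - a) := by
    rw [← pow_add, Nat.add_sub_cancel' hab]
  rw [this, mul_nsmul']
  exact smul_mem_smulSub (AddSubgroup.nsmul_mem S hy _)

lemma smulHom_apply (n : ℕ) (x : G) : (n • AddMonoidHom.id G) x = n • x := rfl

end Aux

section ConvAux

variable {G : Type*} [AddCommGroup G] [LinearOrder G] [IsOrderedAddMonoid G]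

lemma IsConvexSubgroup.of_nsmul_mem {H : AddSubgroup G} (hH : IsConvexSubgroup H)
    {m : ℕ} (hm : 0 < m) {x : G} (hx : m • x ∈ H) : x ∈ H := by
  rcases le_total 0 x with h0 | h0
  · refine hH x (m • x) h0 ?_ hx
    calc x = 1 • x := (one_nsmul x).symm
    _ ≤ m • x := nsmul_le_nsmul_left h0 hm
  · have h0' : 0 ≤ -x := neg_nonneg.mpr h0
    have hx' : m • (-x) ∈ H := by
      simpa using AddSubgroup.neg_mem H hx
    have : -x ∈ H := by
      refine hH (-x) (m • (-x)) h0' ?_ hx'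
      calc -x = 1 • (-x) := (one_nsmul _).symm
      _ ≤ m • (-x) := nsmul_le_nsmul_left h0' hm
    simpa using AddSubgroup.neg_mem H this

end ConvAux

/-- Let `G` be a linearly ordered abelian group with finite spines, `p` a prime,
`H 0 ⊊ … ⊊ H (n-1)` convex subgroups with `H n = G`, and `e 0 < … < e (n-1)` positive
integers.  Then for every `r < n`, the index
`[⋂_{i<n, i≠r} (H i + p^(e i) G) : ⋂_{i<n} (H i + p^(e i) G)]` is infinite iff the index
`[H (r+1) : H r + p H (r+1)]` is infinite.  (Infinite index is expressed by
`AddSubgroup.relindex … = 0`, where `B.relindex A` is the index `[A : B ⊓ A]`.) -/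
theorem relindex_inf_infinite_iff {G : Type*} [AddCommGroup G] [LinearOrder G] [IsOrderedAddMonoid G]
    (hfs : ∀ q : ℕ, q.Prime → {H : AddSubgroup G | ∃ a : G, H = Hsub q a}.Finite)
    (p : ℕ) (hp : p.Prime) (n : ℕ) (H : ℕ → AddSubgroup G)
    (hconv : ∀ i < n, IsConvexSubgroup (H i))
    (hchain : ∀ i j : ℕ, i < j → j ≤ n → H i < H j)
    (hHn : H n = ⊤)
    (e : ℕ → ℕ) (hepos : ∀ i < n, 0 < e i)
    (hemono : ∀ i j : ℕ, i < j → j < n → e i < e j) :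
    ∀ r < n,
      ((⨅ i ∈ Finset.range n, (H i ⊔ smulSub (p ^ e i) ⊤)).relIndex
          (⨅ i ∈ (Finset.range n).erase r, (H i ⊔ smulSub (p ^ e i) ⊤)) = 0) ↔
        ((H r ⊔ smulSub p (H (r + 1))).relIndex (H (r + 1)) = 0) := by
  intro r hr
  set T : AddSubgroup G := H (r + 1) with hT
  set K : ℕ → AddSubgroup G := fun i => H i ⊔ smulSub (p ^ e i) ⊤ with hKdef
  set A : AddSubgroup G := ⨅ i ∈ (Finset.range n).erase r, K i with hA
  set B : AddSubgroup G := ⨅ i ∈ Finset.range n, K i with hB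
  set D : AddSubgroup G := H r ⊔ smulSub p T with hD
  -- basic facts
  have hppos : 0 < p := hp.pos
  have hrmem : r ∈ Finset.range n := Finset.mem_range.mpr hr
  have hHrT : H r ≤ T := (hchain r (r + 1) (lt_add_one r) hr).le
  have hTconv : IsConvexSubgroup T := by
    obtain h | h := eq_or_lt_of_le (show r + 1 ≤ n from hr)
    case inr => exact hconv _ h
    rw [hT, h, hHn]
    intro g h _ _ _
    exact AddSubgroup.mem_top g
  have hTle : ∀ i, r < i → i ≤ n → T ≤ H i := by
    intro i h1 h2
    obtain h | h := eq_or_lt_of_le (show r + 1 ≤ i from h1)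
    · rw [hT, h]
    · exact (hchain _ _ h h2).le
  have hDT : D ≤ T := sup_le hHrT (smulSub_le_self p T)
  have hBle : ∀ i ∈ Finset.range n, B ≤ K i := fun i hi => iInf₂_le i hi
  have hAle : ∀ i ∈ (Finset.range n).erase r, A ≤ K i := fun i hi => iInf₂_le i hi
  have hBA : B = K r ⊓ A := by
    apply le_antisymm
    · exact le_inf (hBle r hrmem) (le_iInf₂ fun i hi => hBle i (Finset.mem_of_mem_erase hi))
    · refine le_iInf₂ fun i hi => ?_
      rcases eq_or_ne i r with rfl | hne
      · exact inf_le_left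
      · exact inf_le_right.trans (hAle i (Finset.mem_erase.mpr ⟨hne, hi⟩))
  have hBleA : B ≤ A := hBA ▸ inf_le_right
  -- the multiplication-by-`p ^ (e r - 1)` map
  set m : ℕ := p ^ (e r - 1) with hm
  set f : G →+ G := m • AddMonoidHom.id G with hf
  have hmapT : AddSubgroup.map f T = smulSub m T := rfl
  have hfx : ∀ x : G, f x = m • x := fun x => rfl
  have herpos : 0 < e r := hepos r hr
  have hper : p ^ e r = m * p := by
    rw [hm, ← pow_succ, Nat.sub_add_cancel herpos]
  -- Fact A : `p^(e r - 1) • t ∈ K i` for `t ∈ T` and `i ≠ r`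
  have factA : ∀ t ∈ T, ∀ i, i < n → i ≠ r → m • t ∈ K i := by
    intro t ht i hin hir
    rcases lt_or_gt_of_ne hir with h | h
    · -- i < r : use divisibility of exponents
      have hei : e i ≤ e r - 1 := Nat.le_sub_one_of_lt (hemono i r h hr)
      have : m • t ∈ smulSub (p ^ (e r - 1)) ⊤ := smul_mem_smulSub (AddSubgroup.mem_top t)
      exact AddSubgroup.mem_sup_right (smulSub_pow_le p hei ⊤ this)
    · -- r < i : T ≤ H i
      exact AddSubgroup.mem_sup_left (AddSubgroup.nsmul_mem (H i) (hTle i h hin.le ht) m)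
  have hfTA : smulSub m T ≤ A := by
    refine le_iInf₂ fun i hi => ?_
    obtain ⟨hir, hin⟩ := Finset.mem_erase.mp hi
    intro x hx
    obtain ⟨t, ht, rfl⟩ := mem_smulSub.mp hx
    exact factA t ht i (Finset.mem_range.mp hin) hir
  -- Fact B : `comap f B ⊓ T = D`
  have factB : AddSubgroup.comap f B ⊓ T = D := by
    apply le_antisymm
    · rintro x ⟨hxf, hxT⟩
      have hxKr : m • x ∈ K r := hBle r hrmem (by rw [← hfx]; exact hxf)
      obtain ⟨h, hh, z, hz, hsum⟩ := AddSubgroup.mem_sup.mp hxKr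
      obtain ⟨g, -, rfl⟩ := mem_smulSub.mp hz
      have hz' : (p ^ e r) • g = m • (p • g) := by rw [hper, mul_nsmul']
      have hhm : m • (x - p • g) = h := by
        rw [nsmul_sub, ← hz', sub_eq_iff_eq_add]
        exact hsum.symm
      have hmpos : 0 < m := pow_pos hppos _
      have hxg : x - p • g ∈ H r := by
        refine (hconv r hr).of_nsmul_mem hmpos ?_
        rw [hhm]; exact hh
      have hpg : p • g ∈ T := by
        have : x - (x - p • g) ∈ T := AddSubgroup.sub_mem T hxT (hHrT hxg)
        simpa using this
      have hg : g ∈ T := hTconv.of_nsmul_mem hppos hpg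
      have : (x - p • g) + p • g ∈ D :=
        AddSubgroup.add_mem D (AddSubgroup.mem_sup_left hxg)
          (AddSubgroup.mem_sup_right (smul_mem_smulSub hg))
      simpa using this
    · refine le_inf ?_ hDT
      intro x hx
      obtain ⟨h, hh, z, hz, hsum⟩ := AddSubgroup.mem_sup.mp hx
      obtain ⟨t, ht, rfl⟩ := mem_smulSub.mp hz
      have hxT : x ∈ T := hDT hx
      simp only [AddSubgroup.mem_comap]
      rw [hfx]
      have : ∀ i ∈ Finset.range n, m • x ∈ K i := by
        intro i hi
        rcases eq_or_ne i r with rfl | hir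
        · -- i = r
          have : m • x = m • h + (p ^ e i) • t := by
            rw [← hsum, nsmul_add, ← mul_nsmul', ← hper]
          rw [this]
          exact AddSubgroup.add_mem _ (AddSubgroup.mem_sup_left (AddSubgroup.nsmul_mem _ hh m))
            (AddSubgroup.mem_sup_right (smul_mem_smulSub (AddSubgroup.mem_top t)))
        · exact factA x hxT i (Finset.mem_range.mp hi) hir
      rw [hB]
      simpa [AddSubgroup.mem_iInf] using this
  -- the tower `C e = H r ⊔ p^e T`
  set C : ℕ → AddSubgroup G := fun k => H r ⊔ smulSub (p ^ k) T with hC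
  have hCleT : ∀ k, C k ≤ T := fun k => sup_le hHrT (smulSub_le_self _ T)
  have hCanti : ∀ k, C (k + 1) ≤ C k :=
    fun k => sup_le le_sup_left (le_trans (smulSub_pow_le p (Nat.le_succ k) T) le_sup_right)
  have hC1D : C 1 = D := by simp only [hC, hD, pow_one]
  -- Fact C : `K r ⊓ T = C (e r)`
  have factC : K r ⊓ T = C (e r) := by
    apply le_antisymm
    · rintro x ⟨hxK, hxT⟩
      obtain ⟨h, hh, z, hz, hsum⟩ := AddSubgroup.mem_sup.mp hxK
      obtain ⟨g, -, rfl⟩ := mem_smulSub.mp hz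
      have hzT : (p ^ e r) • g ∈ T := by
        have : x - h ∈ T := AddSubgroup.sub_mem T hxT (hHrT hh)
        have e1 : x - h = (p ^ e r) • g := by rw [← hsum]; abel
        rwa [e1] at this
      have hg : g ∈ T := hTconv.of_nsmul_mem (pow_pos hppos _) hzT
      rw [← hsum]
      exact AddSubgroup.add_mem _ (AddSubgroup.mem_sup_left hh)
        (AddSubgroup.mem_sup_right (smul_mem_smulSub hg))
    · exact sup_le (le_inf le_sup_left hHrT)
        (le_inf (le_trans (smulSub_mono _ le_top) le_sup_right) (smulSub_le_self _ T))
  -- Fact D : `A ≤ T ⊔ p^(e r) G`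
  set L : AddSubgroup G := T ⊔ smulSub (p ^ e r) ⊤ with hL
  have factD : A ≤ L := by
    obtain h1 | h1 := eq_or_lt_of_le (show r + 1 ≤ n from hr)
    case inr =>
      have hmem : r + 1 ∈ (Finset.range n).erase r :=
        Finset.mem_erase.mpr ⟨Nat.succ_ne_self r, Finset.mem_range.mpr h1⟩
      refine le_trans (hAle _ hmem) ?_
      exact sup_le_sup le_rfl (smulSub_pow_le p (hemono r (r + 1) (lt_add_one r) h1).le ⊤)
    have : T = ⊤ := by rw [hT, h1, hHn]
    calc A ≤ ⊤ := le_top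
    _ = T := this.symm
    _ ≤ L := le_sup_left
  have hLsup : T ⊔ K r = L := by
    rw [hKdef, hL, ← sup_assoc, sup_eq_left.mpr hHrT]
  -- the key identity for part 1
  have hkey : D.relIndex T = B.relIndex (smulSub m T) := by
    rw [← factB, AddSubgroup.inf_relIndex_right, AddSubgroup.relIndex_comap, hmapT]
  -- induction : `(C k).relIndex T ≠ 0` if `D.relIndex T ≠ 0`
  have hind : D.relIndex T ≠ 0 → ∀ k, (C k).relIndex T ≠ 0 := by
    intro hD0
    have hC1 : (C 1).relIndex T ≠ 0 := by rw [hC1D]; exact hD0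
    intro k
    induction k with
    | zero =>
      have : C 0 = T := by
        rw [hC]
        simp only [pow_zero, smulSub_one]
        exact sup_eq_right.mpr hHrT
      rw [this, AddSubgroup.relIndex_self]
      exact one_ne_zero
    | succ i ih =>
      rw [← AddSubgroup.relIndex_mul_relIndex (C (i + 1)) (C i) T (hCanti i) (hCleT i)]
      refine mul_ne_zero ?_ ih
      -- `(C (i+1)).relIndex (C i) ≠ 0`
      set g : G →+ G := (p ^ i) • AddMonoidHom.id G with hg
      have hmapTg : AddSubgroup.map g T = smulSub (p ^ i) T := rfl
      have factE : smulSub (p ^ i) T ⊔ C (i + 1) = C i := by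
        apply le_antisymm
        · exact sup_le le_sup_right (hCanti i)
        · exact sup_le (le_trans le_sup_left le_sup_right) le_sup_left
      have step1 : (C (i + 1)).relIndex (C i) = (AddSubgroup.comap g (C (i + 1))).relIndex T := by
        rw [← factE, AddSubgroup.relIndex_sup_right, AddSubgroup.relIndex_comap, hmapTg]
      have factF : C 1 ≤ AddSubgroup.comap g (C (i + 1)) := by
        intro x hx
        obtain ⟨h, hh, z, hz, hsum⟩ := AddSubgroup.mem_sup.mp hx
        obtain ⟨t, ht, rfl⟩ := mem_smulSub.mp hz
        simp only [AddSubgroup.mem_comap]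
        have hgx : g x = (p ^ i) • x := rfl
        have : (p ^ i) • x = (p ^ i) • h + (p ^ (i + 1)) • t := by
          rw [← hsum, nsmul_add, ← mul_nsmul', ← pow_add]
        rw [hgx, this]
        exact AddSubgroup.add_mem _ (AddSubgroup.mem_sup_left (AddSubgroup.nsmul_mem _ hh _))
          (AddSubgroup.mem_sup_right (smul_mem_smulSub ht))
      rw [step1]
      intro h0
      exact hC1 (AddSubgroup.relIndex_eq_zero_of_le_left factF h0)
  constructor
  · -- infinite `[A : B]` implies infinite `[T : D]`
    intro hBA0
    by_contra hD0
    -- from `D.relIndex T ≠ 0` conclude `B.relIndex A ≠ 0`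
    have hKrA : (K r).relIndex A ≠ 0 := by
      have hKrL : (K r).relIndex L ≠ 0 := by
        rw [← hLsup, AddSubgroup.relIndex_sup_right, ← AddSubgroup.inf_relIndex_right, factC]
        exact hind hD0 (e r)
      intro h0
      exact hKrL (AddSubgroup.relIndex_eq_zero_of_le_right factD h0)
    have : B.relIndex A = (K r).relIndex A := by
      rw [hBA, AddSubgroup.inf_relIndex_right]
    rw [this] at hBA0
    exact hKrA hBA0
  · -- infinite `[T : D]` implies infinite `[A : B]`
    intro hD0
    have : B.relIndex (smulSub m T) = 0 := by rw [← hkey]; exact hD0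
    exact AddSubgroup.relIndex_eq_zero_of_le_right hfTA this
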